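/- Let Ω ⊆ ℝⁿ be an open bounded set, let p ≥ 2, and let σ : Ω × [0,∞) → ℝ satisfy (H1)–(H4). Let A be a set of weakly differentiable functions with gradients (restricted to Ω) in L²(Ω) ∩ L^p(Ω), let φ : ℝⁿ → ℝ be weakly differentiable with ∇φ ∈ L²(Ω) ∩ L^p(Ω), and for each ε ∈ (−1,1) let u_ε minimize the Dirichlet energy F_σ over the translated admissible class A_ε := {v + εφ : v ∈ A}. If ∇u_ε → ∇u₀ in L^p(Ω) as ε → 0, then lim_{ε→0} (F_σ(u_ε) − F_σ(u₀))/ε = ∫_Ω σ(x,|∇u₀(x)|) ∇u₀(x)·∇φ(x) dx. (Proposition 3.4: the Gâteaux derivative of the composed map f ↦ F_σ(u^f) with respect to the boundary datum equals the DtN pairing ⟨Λ_σ(f), φ⟩, written here with interior integrals and with the admissible class A in the role of {u ∈ W^{1,p}(Ω) : u|∂Ω = f}.) -/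

import Mathlib

open MeasureTheory Set Filter
open scoped RealInnerProductSpace Topology

/-- The Dirichlet energy density `Q_σ(x,E) = ∫₀^E σ(x,ξ)·ξ dξ`. -/
noncomputable def dirichletDensity {n : ℕ}
    (σ : EuclideanSpace ℝ (Fin n) → ℝ → ℝ) (x : EuclideanSpace ℝ (Fin n)) (E : ℝ) : ℝ :=
  ∫ ξ in (0:ℝ)..E, σ x ξ * ξ

/-- The Dirichlet energy `F_σ(u) = ∫_Ω Q_σ(x,|∇u(x)|) dx`. -/
noncomputable def dirichletEnergy {n : ℕ} (Ω : Set (EuclideanSpace ℝ (Fin n)))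
    (σ : EuclideanSpace ℝ (Fin n) → ℝ → ℝ) (u : EuclideanSpace ℝ (Fin n) → ℝ) : ℝ :=
  ∫ x in Ω, dirichletDensity σ x ‖gradient u x‖

open scoped ENNReal

namespace GDaux

lemma aux_young {p : ℝ} (hp : 2 ≤ p) {A B : ℝ} (hA : 0 ≤ A) (hB : 0 ≤ B) :
    A ^ (p - 1) * B ≤ A ^ p + B ^ p := by
  have hp1 : 1 < p := by linarith
  have hpq : (p / (p - 1)).HolderConjugate p :=
    (Real.HolderConjugate.conjExponent hp1).symm
  have hy := Real.young_inequality (A ^ (p - 1)) B hpq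
  have h1 : |A ^ (p - 1)| = A ^ (p - 1) := abs_of_nonneg (Real.rpow_nonneg hA _)
  have h2 : |B| = B := abs_of_nonneg hB
  rw [h1, h2] at hy
  have h3 : (A ^ (p - 1)) ^ (p / (p - 1)) = A ^ p := by
    rw [← Real.rpow_mul hA]
    congr 1
    field_simp
    exact div_self (by linarith)
  rw [h3] at hy
  have hq1 : 1 ≤ p / (p - 1) := by
    rw [le_div_iff₀ (by linarith)]; linarith
  have h4 : A ^ p / (p / (p - 1)) ≤ A ^ p :=
    div_le_self (Real.rpow_nonneg hA _) hq1
  have h5 : B ^ p / p ≤ B ^ p := div_le_self (Real.rpow_nonneg hB _) (by linarith)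
  linarith

lemma pointwise_bound {σu E₀ p : ℝ} (hσu : 0 ≤ σu) (hE₀ : 0 < E₀) (hp : 2 ≤ p)
    {s Y ψn B : ℝ} (hY : 0 ≤ Y) (hψn : 0 ≤ ψn) (hYB : Y ≤ B)
    (hs0 : 0 ≤ s) (hs : 0 < Y → s ≤ σu * max 1 ((Y / E₀) ^ (p - 2))) :
    s * Y * ψn ≤ σu * (1 + E₀ ^ (2 - p)) * (ψn + (B ^ p + ψn ^ p)) := by
  have hB : 0 ≤ B := hY.trans hYB
  have hE₀' : (0:ℝ) ≤ E₀ ^ (2 - p) := (Real.rpow_pos_of_pos hE₀ _).le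
  have hRHS0 : 0 ≤ ψn + (B ^ p + ψn ^ p) := by positivity
  rcases eq_or_lt_of_le hY with h0 | hYpos
  · have : s * Y * ψn = 0 := by rw [← h0]; ring
    rw [this]; positivity
  · have h2 : (Y / E₀) ^ (p - 2) * Y = E₀ ^ (2 - p) * Y ^ (p - 1) := by
      rw [Real.div_rpow hY hE₀.le]
      have hE1 : E₀ ^ (2 - p) = (E₀ ^ (p - 2))⁻¹ := by
        rw [show (2 - p) = -(p - 2) by ring, Real.rpow_neg hE₀.le]
      have hY1 : Y ^ (p - 2) * Y = Y ^ (p - 1) := by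
        rw [show (p - 1 : ℝ) = (p - 2) + 1 by ring, Real.rpow_add hYpos,
          Real.rpow_one]
      rw [hE1, ← hY1]
      field_simp
    have hr0 : (0:ℝ) ≤ (Y / E₀) ^ (p - 2) :=
      Real.rpow_nonneg (div_nonneg hY hE₀.le) _
    have h1 : s * Y ≤ σu * (Y + E₀ ^ (2 - p) * Y ^ (p - 1)) := by
      have hmax : max 1 ((Y / E₀) ^ (p - 2)) ≤ 1 + (Y / E₀) ^ (p - 2) :=
        max_le (le_add_of_nonneg_right hr0) (le_add_of_nonneg_left zero_le_one)
      calc s * Y ≤ (σu * max 1 ((Y / E₀) ^ (p - 2))) * Y :=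
            mul_le_mul_of_nonneg_right (hs hYpos) hY
        _ ≤ (σu * (1 + (Y / E₀) ^ (p - 2))) * Y :=
            mul_le_mul_of_nonneg_right (mul_le_mul_of_nonneg_left hmax hσu) hY
        _ = σu * (Y + (Y / E₀) ^ (p - 2) * Y) := by ring
        _ = σu * (Y + E₀ ^ (2 - p) * Y ^ (p - 1)) := by rw [h2]
    have hY1 : Y ≤ 1 + Y ^ (p - 1) := by
      rcases le_total Y 1 with h | h
      · nlinarith [Real.rpow_nonneg hY (p - 1)]
      · have h2' : Y ^ (1:ℝ) ≤ Y ^ (p - 1) :=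
          Real.rpow_le_rpow_of_exponent_le h (by linarith)
        rw [Real.rpow_one] at h2'
        linarith
    have hYB' : Y ^ (p - 1) ≤ B ^ (p - 1) := Real.rpow_le_rpow hY hYB (by linarith)
    have hyoung : B ^ (p - 1) * ψn ≤ B ^ p + ψn ^ p := aux_young hp hB hψn
    have hYp0 : (0:ℝ) ≤ Y ^ (p - 1) := Real.rpow_nonneg hY _
    have hBp0 : (0:ℝ) ≤ B ^ (p - 1) := Real.rpow_nonneg hB _
    have step1 : s * Y * ψn ≤ σu * (Y + E₀ ^ (2 - p) * Y ^ (p - 1)) * ψn :=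
      mul_le_mul_of_nonneg_right h1 hψn
    have step2 : Y + E₀ ^ (2 - p) * Y ^ (p - 1) ≤
        (1 + E₀ ^ (2 - p)) * (1 + Y ^ (p - 1)) := by nlinarith
    have step3 : (1 + Y ^ (p - 1)) * ψn ≤ ψn + (B ^ p + ψn ^ p) := by nlinarith
    have step4 : σu * (Y + E₀ ^ (2 - p) * Y ^ (p - 1)) * ψn ≤
        σu * ((1 + E₀ ^ (2 - p)) * (1 + Y ^ (p - 1))) * ψn := by
      apply mul_le_mul_of_nonneg_right _ hψn
      exact mul_le_mul_of_nonneg_left step2 hσu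
    have step5 : σu * ((1 + E₀ ^ (2 - p)) * (1 + Y ^ (p - 1))) * ψn ≤
        σu * (1 + E₀ ^ (2 - p)) * (ψn + (B ^ p + ψn ^ p)) := by
      have := mul_le_mul_of_nonneg_left step3
        (show (0:ℝ) ≤ σu * (1 + E₀ ^ (2 - p)) from mul_nonneg hσu (by linarith))
      calc σu * ((1 + E₀ ^ (2 - p)) * (1 + Y ^ (p - 1))) * ψn
          = σu * (1 + E₀ ^ (2 - p)) * ((1 + Y ^ (p - 1)) * ψn) := by ring
        _ ≤ σu * (1 + E₀ ^ (2 - p)) * (ψn + (B ^ p + ψn ^ p)) := this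
    linarith

lemma density_bound {σx : ℝ → ℝ} {σu E₀ p : ℝ} (hσu : 0 ≤ σu) (hE₀ : 0 < E₀) (hp : 2 ≤ p)
    (hbd : ∀ ξ : ℝ, 0 < ξ → 0 ≤ σx ξ ∧ σx ξ ≤ σu * max 1 ((ξ / E₀) ^ (p - 2)))
    {E : ℝ} (hE : 0 ≤ E) :
    |∫ ξ in (0:ℝ)..E, σx ξ * ξ| ≤ σu * (1 + E₀ ^ (2 - p)) * (1 + 2 * E ^ p) := by
  have hE₀' : (0:ℝ) ≤ E₀ ^ (2 - p) := (Real.rpow_pos_of_pos hE₀ _).le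
  rcases eq_or_lt_of_le hE with h0 | hEpos
  · rw [← h0, intervalIntegral.integral_same]
    simp only [abs_zero]
    positivity
  · have hr0' : (0:ℝ) ≤ (E / E₀) ^ (p - 2) := Real.rpow_nonneg (by positivity) _
    have key : ∀ ξ ∈ Set.uIoc (0:ℝ) E, ‖σx ξ * ξ‖ ≤ σu * (1 + (E / E₀) ^ (p - 2)) * E := by
      intro ξ hξ
      rw [Set.uIoc_of_le hEpos.le] at hξ
      obtain ⟨hξ0, hξE⟩ := hξ
      obtain ⟨hb0, hb1⟩ := hbd ξ hξ0
      have hr0 : (0:ℝ) ≤ (ξ / E₀) ^ (p - 2) := Real.rpow_nonneg (by positivity) _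
      have hr1 : (ξ / E₀) ^ (p - 2) ≤ (E / E₀) ^ (p - 2) :=
        Real.rpow_le_rpow (by positivity) (by gcongr) (by linarith)
      have hmax : max 1 ((ξ / E₀) ^ (p - 2)) ≤ 1 + (E / E₀) ^ (p - 2) :=
        max_le (le_add_of_nonneg_right hr0') (by linarith)
      rw [Real.norm_eq_abs, abs_of_nonneg (mul_nonneg hb0 hξ0.le)]
      have hb2 : σx ξ ≤ σu * (1 + (E / E₀) ^ (p - 2)) :=
        hb1.trans (mul_le_mul_of_nonneg_left hmax hσu)
      have hfac : (0:ℝ) ≤ σu * (1 + (E / E₀) ^ (p - 2)) := mul_nonneg hσu (by linarith)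
      calc σx ξ * ξ ≤ (σu * (1 + (E / E₀) ^ (p - 2))) * ξ :=
            mul_le_mul_of_nonneg_right hb2 hξ0.le
        _ ≤ σu * (1 + (E / E₀) ^ (p - 2)) * E := mul_le_mul_of_nonneg_left hξE hfac
    have hle := intervalIntegral.norm_integral_le_of_norm_le_const key
    rw [Real.norm_eq_abs] at hle
    have habs : |E - 0| = E := by rw [sub_zero, abs_of_nonneg hE]
    rw [habs] at hle
    have hsplit : (E / E₀) ^ (p - 2) * (E * E) = E₀ ^ (2 - p) * E ^ p := by
      rw [Real.div_rpow hE hE₀.le, show (2 - p) = -(p - 2) by ring,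
        Real.rpow_neg hE₀.le]
      have hthis : E ^ (p - 2) * (E * E) = E ^ p := by
        rw [show p = (p - 2) + 1 + 1 by ring, Real.rpow_add hEpos,
          Real.rpow_add hEpos, Real.rpow_one]
        ring
      rw [div_mul_eq_mul_div, hthis, div_eq_inv_mul]
    have hE2 : E * E ≤ 1 + E ^ p := by
      rcases le_total E 1 with h | h
      · nlinarith [Real.rpow_nonneg hE p]
      · have h2' : E ^ (2:ℝ) ≤ E ^ p := Real.rpow_le_rpow_of_exponent_le h hp
        rw [show (2:ℝ) = ((2:ℕ):ℝ) by norm_num, Real.rpow_natCast] at h2'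
        nlinarith
    have hEp0 : (0:ℝ) ≤ E ^ p := Real.rpow_nonneg hE _
    calc |∫ ξ in (0:ℝ)..E, σx ξ * ξ| ≤ σu * (1 + (E / E₀) ^ (p - 2)) * E * E := hle
      _ = σu * (E * E) + σu * ((E / E₀) ^ (p - 2) * (E * E)) := by ring
      _ = σu * (E * E) + σu * (E₀ ^ (2 - p) * E ^ p) := by rw [hsplit]
      _ ≤ σu * (1 + E₀ ^ (2 - p)) * (1 + 2 * E ^ p) := by
          nlinarith [mul_le_mul_of_nonneg_left hE2 hσu, mul_nonneg hσu hEp0,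
            mul_nonneg hσu hE₀', mul_nonneg (mul_nonneg hσu hE₀') hEp0]

variable {E : Type*} [NormedAddCommGroup E] [InnerProductSpace ℝ E]

lemma ftc_pointwise (σx : ℝ → ℝ) (hcont : ContinuousOn σx (Set.Ici 0))
    {σu E₀ p : ℝ} (hσu : 0 ≤ σu) (hE₀ : 0 < E₀) (hp : 2 ≤ p)
    (hbd : ∀ ξ : ℝ, 0 < ξ → 0 ≤ σx ξ ∧ σx ξ ≤ σu * max 1 ((ξ / E₀) ^ (p - 2)))
    (a b : E) :
    (∫ ξ in (0:ℝ)..‖a + b‖, σx ξ * ξ) - (∫ ξ in (0:ℝ)..‖a‖, σx ξ * ξ)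
      = ∫ t in (0:ℝ)..1, σx ‖a + t • b‖ * ⟪a + t • b, b⟫ := by
  set Qf : ℝ → ℝ := fun En => ∫ ξ in (0:ℝ)..En, σx ξ * ξ with hQf
  set c : ℝ → E := fun t => a + t • b with hc
  set d : ℝ → ℝ := fun t => σx ‖c t‖ * ⟪c t, b⟫ with hd
  have hmul : ContinuousOn (fun ξ : ℝ => σx ξ * ξ) (Set.Ici 0) :=
    hcont.mul continuousOn_id
  have hcCont : Continuous c := continuous_const.add (continuous_id.smul continuous_const)
  have hdCont : Continuous d := by
    have h1 : Continuous fun t => σx ‖c t‖ :=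
      hcont.comp_continuous (continuous_norm.comp hcCont) fun t => norm_nonneg _
    exact h1.mul (hcCont.inner continuous_const)
  have hQbd : ∀ δ : ℝ, 0 ≤ δ → δ ≤ E₀ → |Qf δ| ≤ σu * δ * δ := by
    intro δ h0 h1
    have key : ∀ ξ ∈ Set.uIoc (0:ℝ) δ, ‖σx ξ * ξ‖ ≤ σu * δ := by
      intro ξ hξ
      rw [Set.uIoc_of_le h0] at hξ
      obtain ⟨hξ0, hξδ⟩ := hξ
      obtain ⟨hb0, hb1⟩ := hbd ξ hξ0
      have hle1 : (ξ / E₀) ^ (p - 2) ≤ 1 :=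
        Real.rpow_le_one (by positivity) (by rw [div_le_one hE₀]; linarith) (by linarith)
      have hmax : max 1 ((ξ / E₀) ^ (p - 2)) = 1 := max_eq_left hle1
      rw [hmax, mul_one] at hb1
      rw [Real.norm_eq_abs, abs_of_nonneg (mul_nonneg hb0 hξ0.le)]
      calc σx ξ * ξ ≤ σu * ξ := mul_le_mul_of_nonneg_right hb1 hξ0.le
        _ ≤ σu * δ := mul_le_mul_of_nonneg_left hξδ hσu
    have h2 := intervalIntegral.norm_integral_le_of_norm_le_const key
    rw [Real.norm_eq_abs, sub_zero, abs_of_nonneg h0] at h2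
    exact h2
  have hderiv : ∀ t : ℝ, HasDerivAt (fun s => Qf ‖c s‖) (d t) t := by
    intro t
    rcases eq_or_ne (c t) 0 with h0 | h0
    · have hdt : d t = 0 := by rw [hd]; simp [h0]
      rw [hdt, hasDerivAt_iff_isLittleO]
      have hval : ∀ s, c s = (s - t) • b := by
        intro s
        have ha' : a = -(t • b) := by
          have h0' : a + t • b = 0 := h0
          exact eq_neg_of_add_eq_zero_left h0'
        rw [hc]
        simp only
        rw [ha', sub_smul]
        abel
      have hQ0 : Qf ‖c t‖ = 0 := by
        rw [h0, norm_zero, hQf]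
        exact intervalIntegral.integral_same
      have hgoal : (fun s => Qf ‖c s‖ - Qf ‖c t‖ - (s - t) • (0:ℝ))
          = fun s => Qf (|s - t| * ‖b‖) := by
        funext s
        rw [hQ0, hval s, norm_smul, Real.norm_eq_abs, smul_zero, sub_zero, sub_zero]
      rw [hgoal, Asymptotics.isLittleO_iff]
      intro C hC
      have hpos : 0 < min (E₀ / (‖b‖ + 1)) (C / (σu * ‖b‖ ^ 2 + 1)) := by
        apply lt_min <;> positivity
      filter_upwards [Metric.ball_mem_nhds t hpos] with s hs
      rw [Metric.mem_ball, Real.dist_eq] at hs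
      have hs1 : |s - t| ≤ E₀ / (‖b‖ + 1) := hs.le.trans (min_le_left _ _)
      have hs2 : |s - t| ≤ C / (σu * ‖b‖ ^ 2 + 1) := hs.le.trans (min_le_right _ _)
      have h1 : |s - t| * (‖b‖ + 1) ≤ E₀ := by
        rw [← le_div_iff₀ (by positivity)]; exact hs1
      have h2 : |s - t| * (σu * ‖b‖ ^ 2 + 1) ≤ C := by
        rw [← le_div_iff₀ (by positivity)]; exact hs2
      have hδ0 : (0:ℝ) ≤ |s - t| * ‖b‖ := mul_nonneg (abs_nonneg _) (norm_nonneg _)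
      have hδE : |s - t| * ‖b‖ ≤ E₀ := by nlinarith [abs_nonneg (s - t)]
      have hq := hQbd _ hδ0 hδE
      rw [Real.norm_eq_abs, Real.norm_eq_abs]
      nlinarith [mul_le_mul_of_nonneg_left h2 (abs_nonneg (s - t)),
        sq_nonneg (s - t), abs_nonneg (s - t), norm_nonneg b, sq_abs (s - t)]
    · have hE : 0 < ‖c t‖ := norm_pos_iff.2 h0
      have hcder : HasDerivAt c b t := by
        have h := ((hasDerivAt_id t).smul_const b).const_add a
        simp only [one_smul] at h
        exact h
      have hinner : HasDerivAt (fun s => ⟪c s, c s⟫) (⟪c t, b⟫ + ⟪b, c t⟫) t :=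
        HasDerivAt.inner ℝ hcder hcder
      have hsqrt : HasDerivAt (fun s => ‖c s‖) (⟪c t, b⟫ / ‖c t‖) t := by
        have hne : ⟪c t, c t⟫ ≠ 0 := by
          rw [real_inner_self_eq_norm_mul_norm]; positivity
        have hcomp := (Real.hasDerivAt_sqrt hne).comp t hinner
        simp only [Function.comp_def] at hcomp
        have hfun : (fun s => Real.sqrt ⟪c s, c s⟫) = fun s => ‖c s‖ := by
          funext s
          rw [real_inner_self_eq_norm_mul_norm, Real.sqrt_mul_self (norm_nonneg _)]
        rw [hfun] at hcomp
        convert hcomp using 1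
        · rfl
        · rfl
        rw [real_inner_self_eq_norm_mul_norm, Real.sqrt_mul_self (norm_nonneg _),
          real_inner_comm b (c t)]
        field_simp
        ring
      have hQder : HasDerivAt Qf (σx ‖c t‖ * ‖c t‖) ‖c t‖ := by
        apply intervalIntegral.integral_hasDerivAt_right
        · apply ContinuousOn.intervalIntegrable
          apply hmul.mono
          rw [Set.uIcc_of_le hE.le]
          exact Set.Icc_subset_Ici_self
        · exact ⟨Set.Ioi 0, isOpen_Ioi.mem_nhds hE,
            (hmul.mono Set.Ioi_subset_Ici_self).aestronglyMeasurable measurableSet_Ioi⟩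
        · exact hmul.continuousAt
            (Filter.mem_of_superset (isOpen_Ioi.mem_nhds hE) Set.Ioi_subset_Ici_self)
      have hcomp := hQder.comp t hsqrt
      simp only [Function.comp_def] at hcomp
      convert hcomp using 1
      · rfl
      · rfl
      rw [hd]
      simp only
      field_simp
  have hInt : IntervalIntegrable d volume 0 1 := hdCont.intervalIntegrable 0 1
  have hftc := intervalIntegral.integral_eq_sub_of_hasDerivAt
    (f := fun s => Qf ‖c s‖) (f' := d) (fun t _ => hderiv t) hInt
  simp only [hd, hc, hQf, one_smul, zero_smul, add_zero] at hftc ⊢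
  rw [hftc]

/-- Carathéodory-type composition: if `σ` is a.e.-measurable in `x` for each fixed
nonnegative `E` and a.e. continuous in `E` on `[0,∞)`, then `z ↦ σ (π z) (h z)` is
a.e.-measurable for any measurable nonnegative `h` and quasi-measure-preserving `π`. -/
lemma aemeasurable_comp_nonneg
    {X : Type*} [MeasurableSpace X] {μ : Measure X}
    {α : Type*} [MeasurableSpace α] {ρ : Measure α}
    (σ : X → ℝ → ℝ)
    (hσmeas : ∀ E : ℝ, 0 ≤ E → AEMeasurable (fun x => σ x E) μ)
    (hσcont : ∀ᵐ x ∂μ, ContinuousOn (fun E => σ x E) (Set.Ici 0))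
    (π : α → X) (hπ : Measure.QuasiMeasurePreserving π ρ μ)
    (h : α → ℝ) (hh : Measurable h) (hh0 : ∀ z, 0 ≤ h z) :
    AEMeasurable (fun z => σ (π z) (h z)) ρ := by
  have hF : ∀ j : ℕ, ∀ m : ℕ, AEMeasurable (fun z => σ (π z) ((j : ℝ) / 2 ^ m)) ρ :=
    fun j m => (hσmeas _ (by positivity)).comp_quasiMeasurePreserving hπ
  set D : ℕ → α → ℝ := fun m z => ((⌈h z * 2 ^ m⌉₊ : ℝ) / 2 ^ m) with hD
  have hmeasD : ∀ m, AEMeasurable (fun z => σ (π z) (D m z)) ρ := by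
    intro m
    set N : α → ℕ := fun z => ⌈h z * 2 ^ m⌉₊ with hN
    have hNmeas : Measurable N := (hh.mul measurable_const).nat_ceil
    have hFm : ∀ j : ℕ, ∃ f : α → ℝ, Measurable f ∧
        (fun z => σ (π z) ((j : ℝ) / 2 ^ m)) =ᵐ[ρ] f :=
      fun j => ⟨(hF j m).mk _, (hF j m).measurable_mk, (hF j m).ae_eq_mk⟩
    choose Fm hFmeas hFeq using hFm
    have hGmeas : Measurable fun z => Fm (N z) z := by
      have hjoint : Measurable fun q : α × ℕ => Fm q.2 q.1 :=
        measurable_from_prod_countable_left fun j => hFmeas j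
      exact hjoint.comp (measurable_id.prodMk hNmeas)
    apply (hGmeas.aemeasurable).congr
    have hall : ∀ᵐ z ∂ρ, ∀ j : ℕ, σ (π z) ((j : ℝ) / 2 ^ m) = Fm j z :=
      ae_all_iff.2 fun j => hFeq j
    filter_upwards [hall] with z hz
    exact (hz (N z)).symm
  have hcont' : ∀ᵐ z ∂ρ, ContinuousOn (fun En => σ (π z) En) (Set.Ici 0) := hπ.ae hσcont
  apply aemeasurable_of_tendsto_metrizable_ae atTop hmeasD
  filter_upwards [hcont'] with z hz
  have h0 : 0 ≤ h z := hh0 z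
  have hle : ∀ m : ℕ, h z ≤ D m z := by
    intro m
    rw [hD]
    simp only
    rw [le_div_iff₀ (by positivity)]
    exact Nat.le_ceil _
  have hub : ∀ m : ℕ, D m z ≤ h z + ((2:ℝ) ^ m)⁻¹ := by
    intro m
    rw [hD]
    simp only
    rw [div_le_iff₀ (by positivity)]
    have hcl := (Nat.ceil_lt_add_one (by positivity : (0:ℝ) ≤ h z * 2 ^ m)).le
    have : (h z + ((2:ℝ) ^ m)⁻¹) * 2 ^ m = h z * 2 ^ m + 1 := by
      field_simp
    rw [this]
    exact hcl
  have htend0 : Tendsto (fun m : ℕ => D m z) atTop (𝓝 (h z)) := by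
    apply tendsto_of_tendsto_of_tendsto_of_le_of_le
      (tendsto_const_nhds : Tendsto (fun _ : ℕ => h z) atTop (𝓝 (h z))) ?_ hle hub
    have : Tendsto (fun m : ℕ => ((2:ℝ) ^ m)⁻¹) atTop (𝓝 0) := by
      apply tendsto_inv_atTop_zero.comp
      exact tendsto_pow_atTop_atTop_of_one_lt one_lt_two
    simpa using tendsto_const_nhds.add this
  have htendW : Tendsto (fun m : ℕ => D m z) atTop (𝓝[Set.Ici 0] (h z)) := by
    apply tendsto_nhdsWithin_of_tendsto_nhds_of_eventually_within _ htend0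
    filter_upwards with m
    exact le_trans h0 (hle m)
  exact ((hz (h z) h0).tendsto).comp htendW

/-- Measurability of the composed Dirichlet density. -/
lemma qcomp_aestronglyMeasurable
    {X : Type*} [MeasurableSpace X] {μ : Measure X} [SFinite μ]
    (σ : X → ℝ → ℝ)
    (hσmeas : ∀ E : ℝ, 0 ≤ E → AEMeasurable (fun x => σ x E) μ)
    (hσcont : ∀ᵐ x ∂μ, ContinuousOn (fun E => σ x E) (Set.Ici 0))
    (g : X → ℝ) (hg : Measurable g) (hg0 : ∀ x, 0 ≤ g x) :
    AEStronglyMeasurable (fun x => ∫ ξ in (0:ℝ)..(g x), σ x ξ * ξ) μ := by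
  set ν : Measure ℝ := volume.restrict (Set.Ioi 0) with hν
  have hπ : Measure.QuasiMeasurePreserving (Prod.fst : X × ℝ → X) (μ.prod ν) μ :=
    Measure.quasiMeasurePreserving_fst
  have hσj : AEMeasurable (fun q : X × ℝ => σ q.1 (max q.2 0)) (μ.prod ν) :=
    aemeasurable_comp_nonneg σ hσmeas hσcont Prod.fst hπ (fun q => max q.2 0)
      (measurable_snd.max measurable_const) (fun q => le_max_right _ _)
  have hae : ∀ᵐ q : X × ℝ ∂(μ.prod ν), 0 < q.2 := by
    have hnull : (μ.prod ν) (Set.univ ×ˢ Set.Iic (0:ℝ)) = 0 := by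
      rw [Measure.prod_prod]
      have hz : ν (Set.Iic (0:ℝ)) = 0 := by
        rw [hν, Measure.restrict_apply measurableSet_Iic]
        have : Set.Iic (0:ℝ) ∩ Set.Ioi 0 = ∅ := by
          ext x
          simp only [Set.mem_inter_iff, Set.mem_Iic, Set.mem_Ioi, Set.mem_empty_iff_false,
            iff_false, not_and, not_lt]
          intro h1; exact h1
        rw [this, measure_empty]
      rw [hz, mul_zero]
    rw [ae_iff]
    apply measure_mono_null _ hnull
    intro q hq
    simp only [Set.mem_setOf_eq, not_lt] at hq
    exact Set.mem_prod.mpr ⟨Set.mem_univ _, hq⟩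
  have hσj' : AEMeasurable (fun q : X × ℝ => σ q.1 q.2) (μ.prod ν) := by
    apply hσj.congr
    filter_upwards [hae] with q hq
    rw [max_eq_left hq.le]
  have hsmeas : MeasurableSet {q : X × ℝ | q.2 ≤ g q.1} :=
    measurableSet_le measurable_snd (hg.comp measurable_fst)
  have hfm : AEStronglyMeasurable
      (fun q : X × ℝ => Set.indicator {q : X × ℝ | q.2 ≤ g q.1}
        (fun q => σ q.1 q.2 * q.2) q) (μ.prod ν) :=
    ((hσj'.mul measurable_snd.aemeasurable).aestronglyMeasurable).indicator hsmeas
  have key := hfm.integral_prod_right'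
  have hEq : ∀ x, (∫ y, Set.indicator {q : X × ℝ | q.2 ≤ g q.1}
      (fun q => σ q.1 q.2 * q.2) (x, y) ∂ν) = ∫ ξ in (0:ℝ)..g x, σ x ξ * ξ := by
    intro x
    have h1 : (fun ξ : ℝ => Set.indicator {q : X × ℝ | q.2 ≤ g q.1}
        (fun q => σ q.1 q.2 * q.2) (x, ξ))
        = Set.indicator (Set.Iic (g x)) (fun ξ => σ x ξ * ξ) := by
      funext ξ
      by_cases hc : ξ ≤ g x
      · rw [Set.indicator_of_mem (by exact hc) , Set.indicator_of_mem (by exact hc)]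
      · rw [Set.indicator_of_notMem (by exact hc), Set.indicator_of_notMem (by exact hc)]
    rw [h1, integral_indicator measurableSet_Iic, hν,
      Measure.restrict_restrict measurableSet_Iic, Set.inter_comm, Set.Ioi_inter_Iic]
    exact (intervalIntegral.integral_of_le (hg0 x)).symm
  exact key.congr (Filter.Eventually.of_forall fun x => hEq x)

lemma exists_dominating
    {X : Type*} [MeasurableSpace X] {μ : Measure X}
    {E : Type*} [NormedAddCommGroup E]
    {pp : ℝ≥0∞} (hpp1 : 1 ≤ pp) (hppt : pp ≠ ∞)
    {d : ℕ → X → E}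
    (hd : ∀ k, AEStronglyMeasurable (d k) μ)
    (hsum : ∀ k, eLpNorm (d k) pp μ ≤ 2⁻¹ ^ k) :
    ∃ W : X → ℝ, MemLp W pp μ ∧ (∀ x, 0 ≤ W x) ∧
      (∀ᵐ x ∂μ, (∀ k, ‖d k x‖ ≤ W x) ∧ Tendsto (fun k => d k x) atTop (𝓝 0)) := by
  have hpp0 : pp ≠ 0 := by
    intro h; rw [h] at hpp1; simp at hpp1
  set r : ℝ := pp.toReal with hr
  have hr0 : 0 < r := ENNReal.toReal_pos hpp0 hppt
  set H : X → ℝ≥0∞ := fun x => ∑' k, (‖d k x‖₊ : ℝ≥0∞) with hH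
  have hHmeas : AEMeasurable H μ := AEMeasurable.ennreal_tsum fun k => (hd k).enorm
  have hparts : ∀ N : ℕ, eLpNorm (fun x => ∑ k ∈ Finset.range N, ‖d k x‖) pp μ ≤ 2 := by
    intro N
    have h1 : (fun x => ∑ k ∈ Finset.range N, ‖d k x‖)
        = ∑ k ∈ Finset.range N, (fun x => ‖d k x‖) := by
      funext x; rw [Finset.sum_apply]
    rw [h1]
    calc eLpNorm (∑ k ∈ Finset.range N, fun x => ‖d k x‖) pp μ
        ≤ ∑ k ∈ Finset.range N, eLpNorm (fun x => ‖d k x‖) pp μ :=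
          eLpNorm_sum_le (fun k _ => (hd k).norm) hpp1
      _ = ∑ k ∈ Finset.range N, eLpNorm (d k) pp μ := by
          apply Finset.sum_congr rfl; intro k _; exact eLpNorm_norm (d k)
      _ ≤ ∑ k ∈ Finset.range N, (2:ℝ≥0∞)⁻¹ ^ k :=
          Finset.sum_le_sum fun k _ => hsum k
      _ ≤ ∑' k : ℕ, (2:ℝ≥0∞)⁻¹ ^ k := ENNReal.sum_le_tsum _
      _ = (1 - 2⁻¹)⁻¹ := ENNReal.tsum_geometric _
      _ ≤ 2 := by norm_num
  have hHkey : ∫⁻ x, H x ^ r ∂μ ≤ 2 ^ r := by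
    have hTmono : ∀ x, Monotone fun N => ∑ k ∈ Finset.range N, (‖d k x‖₊ : ℝ≥0∞) := by
      intro x N M hNM
      exact Finset.sum_le_sum_of_subset (Finset.range_subset_range.2 hNM)
    have hsup : ∀ x, H x ^ r = ⨆ N : ℕ, (∑ k ∈ Finset.range N, (‖d k x‖₊ : ℝ≥0∞)) ^ r := by
      intro x
      have h1 : H x = ⨆ N : ℕ, ∑ k ∈ Finset.range N, (‖d k x‖₊ : ℝ≥0∞) :=
        ENNReal.tsum_eq_iSup_nat
      rw [h1]
      apply le_antisymm
      · have htend : Tendsto (fun N => (∑ k ∈ Finset.range N, (‖d k x‖₊ : ℝ≥0∞)) ^ r)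
            atTop (𝓝 ((⨆ N : ℕ, ∑ k ∈ Finset.range N, (‖d k x‖₊ : ℝ≥0∞)) ^ r)) := by
          apply (ENNReal.continuous_rpow_const.tendsto _).comp
          exact tendsto_atTop_iSup (hTmono x)
        exact le_of_tendsto' htend (fun N => le_iSup
          (fun N => (∑ k ∈ Finset.range N, (‖d k x‖₊ : ℝ≥0∞)) ^ r) N)
      · apply iSup_le
        intro N
        exact ENNReal.rpow_le_rpow
          (le_iSup (fun N => ∑ k ∈ Finset.range N, (‖d k x‖₊ : ℝ≥0∞)) N) hr0.le
    have hcalc : ∫⁻ x, H x ^ r ∂μ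
        = ⨆ N : ℕ, ∫⁻ x, (∑ k ∈ Finset.range N, (‖d k x‖₊ : ℝ≥0∞)) ^ r ∂μ := by
      rw [lintegral_congr fun x => hsup x]
      apply lintegral_iSup'
      · intro N
        exact (ENNReal.continuous_rpow_const.measurable).comp_aemeasurable
          (Finset.aemeasurable_fun_sum _ (fun k _ => (hd k).enorm))
      · apply Filter.Eventually.of_forall
        intro x N M hNM
        exact ENNReal.rpow_le_rpow (hTmono x hNM) hr0.le
    rw [hcalc]
    apply iSup_le
    intro N
    have heq : ∀ x, (∑ k ∈ Finset.range N, (‖d k x‖₊ : ℝ≥0∞)) ^ r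
        = (‖∑ k ∈ Finset.range N, ‖d k x‖‖₊ : ℝ≥0∞) ^ r := by
      intro x
      congr 1
      have h1 : ∀ k : ℕ, (‖d k x‖₊ : ℝ≥0∞) = ENNReal.ofReal ‖d k x‖ :=
        fun k => (ofReal_norm _).symm
      simp_rw [h1]
      rw [← ENNReal.ofReal_sum_of_nonneg (fun k _ => norm_nonneg _),
        ← enorm_eq_nnnorm, ← ofReal_norm]
      congr 1
      rw [Real.norm_eq_abs, abs_of_nonneg (Finset.sum_nonneg fun k _ => norm_nonneg _)]
    rw [lintegral_congr fun x => heq x]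
    have hN := hparts N
    rw [eLpNorm_eq_lintegral_rpow_enorm_toReal hpp0 hppt] at hN
    calc ∫⁻ x, (‖∑ k ∈ Finset.range N, ‖d k x‖‖₊ : ℝ≥0∞) ^ r ∂μ
        = ((∫⁻ x, (‖∑ k ∈ Finset.range N, ‖d k x‖‖₊ : ℝ≥0∞) ^ r ∂μ) ^ (1/r)) ^ r := by
          rw [← ENNReal.rpow_mul, one_div, inv_mul_cancel₀ hr0.ne', ENNReal.rpow_one]
      _ ≤ 2 ^ r := ENNReal.rpow_le_rpow hN hr0.le
  have hfin : ∀ᵐ x ∂μ, H x < ∞ := by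
    have h1 : ∫⁻ x, H x ^ r ∂μ ≠ ∞ :=
      ne_of_lt (lt_of_le_of_lt hHkey (ENNReal.rpow_lt_top_of_nonneg hr0.le (by norm_num)))
    have h2 := ae_lt_top'
      ((ENNReal.continuous_rpow_const.measurable).comp_aemeasurable hHmeas) h1
    filter_upwards [h2] with x hx
    simp only [Function.comp_apply] at hx
    by_contra hcon
    push_neg at hcon
    have hxt : H x = ∞ := top_unique hcon
    rw [hxt, ENNReal.top_rpow_of_pos hr0] at hx
    exact lt_irrefl _ hx
  refine ⟨fun x => (H x).toReal, ⟨hHmeas.ennreal_toReal.aestronglyMeasurable, ?_⟩,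
    fun x => ENNReal.toReal_nonneg, ?_⟩
  · rw [eLpNorm_eq_lintegral_rpow_enorm_toReal hpp0 hppt]
    have hcong : ∫⁻ x, (‖(H x).toReal‖₊ : ℝ≥0∞) ^ r ∂μ ≤ ∫⁻ x, H x ^ r ∂μ := by
      apply lintegral_mono_ae
      filter_upwards with x
      apply ENNReal.rpow_le_rpow _ hr0.le
      rw [← enorm_eq_nnnorm, ← ofReal_norm, Real.norm_eq_abs, abs_of_nonneg ENNReal.toReal_nonneg]
      exact ENNReal.ofReal_toReal_le
    calc (∫⁻ x, (‖(H x).toReal‖₊ : ℝ≥0∞) ^ r ∂μ) ^ (1/r)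
        ≤ (2 ^ r) ^ (1/r) := ENNReal.rpow_le_rpow (le_trans hcong hHkey) (by positivity)
      _ < ∞ := by
          apply ENNReal.rpow_lt_top_of_nonneg (by positivity)
          exact ne_of_lt (ENNReal.rpow_lt_top_of_nonneg hr0.le (by norm_num))
  · filter_upwards [hfin] with x hx
    have hsummable : Summable fun k => ‖d k x‖ := by
      have h1 := ENNReal.summable_toReal (ne_of_lt hx)
      have h2 : ∀ k : ℕ, ((‖d k x‖₊ : ℝ≥0∞)).toReal = ‖d k x‖ := by
        intro k; rw [ENNReal.coe_toReal, coe_nnnorm]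
      simpa [h2] using h1
    constructor
    · intro k
      have h1 : (‖d k x‖₊ : ℝ≥0∞) ≤ H x := ENNReal.le_tsum k
      have h2 := ENNReal.toReal_mono (ne_of_lt hx) h1
      rw [ENNReal.coe_toReal, coe_nnnorm] at h2
      exact h2
    · rw [tendsto_zero_iff_norm_tendsto_zero]
      exact hsummable.tendsto_atTop_zero

lemma gradient_measurable {n : ℕ} (w : EuclideanSpace ℝ (Fin n) → ℝ) :
    Measurable fun x => gradient w x := by
  unfold gradient
  exact ((InnerProductSpace.toDual ℝ
    (EuclideanSpace ℝ (Fin n))).symm.continuous.measurable).comp (measurable_fderiv ℝ w)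

lemma gradient_add_smul {n : ℕ} {w φ : EuclideanSpace ℝ (Fin n) → ℝ}
    (hw : Differentiable ℝ w) (hφ : Differentiable ℝ φ) (r : ℝ)
    (x : EuclideanSpace ℝ (Fin n)) :
    gradient (fun y => w y + r * φ y) x = gradient w x + r • gradient φ x := by
  unfold gradient
  rw [fderiv_fun_add (hw.differentiableAt) ((hφ.differentiableAt).const_mul r),
    fderiv_const_mul (hφ.differentiableAt) r, map_add]
  congr 1
  exact (InnerProductSpace.toDual ℝ (EuclideanSpace ℝ (Fin n))).symm.toLinearIsometry.map_smul r _

lemma key_tendsto {n : ℕ}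
    {μ : Measure (EuclideanSpace ℝ (Fin n))} [IsFiniteMeasure μ]
    (σ : EuclideanSpace ℝ (Fin n) → ℝ → ℝ)
    (hσmeas : ∀ E : ℝ, 0 ≤ E → AEMeasurable (fun x => σ x E) μ)
    (hσcont : ∀ᵐ x ∂μ, ContinuousOn (fun E => σ x E) (Set.Ici 0))
    {σu E₀ p : ℝ} (hσu : 0 ≤ σu) (hE₀ : 0 < E₀) (hp : 2 ≤ p)
    (hbd : ∀ᵐ x ∂μ, ∀ ξ : ℝ, 0 < ξ → 0 ≤ σ x ξ ∧ σ x ξ ≤ σu * max 1 ((ξ / E₀) ^ (p - 2)))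
    (ψ : EuclideanSpace ℝ (Fin n) → EuclideanSpace ℝ (Fin n))
    (hψmeas : Measurable ψ) (hψp : MemLp ψ (ENNReal.ofReal p) μ)
    (F : Filter ℝ) [F.IsCountablyGenerated]
    (hid : Tendsto (fun ε : ℝ => ε) F (𝓝 0))
    (hsmall : ∀ᶠ ε in F, |ε| ≤ 1)
    (a : ℝ → EuclideanSpace ℝ (Fin n) → EuclideanSpace ℝ (Fin n))
    (a₀ : EuclideanSpace ℝ (Fin n) → EuclideanSpace ℝ (Fin n))
    (hameas : ∀ ε, Measurable (a ε))
    (ha₀meas : Measurable a₀) (ha₀ : MemLp a₀ (ENNReal.ofReal p) μ)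
    (hconv : Tendsto (fun ε => eLpNorm (fun x => a ε x - a₀ x) (ENNReal.ofReal p) μ) F (𝓝 0))
    (c : ℝ → ℝ) (hc : Continuous c) (hc1 : ∀ t ∈ Set.Ioc (0:ℝ) 1, |c t| ≤ 1) :
    Tendsto (fun ε => ∫ x, (∫ t in (0:ℝ)..1,
        σ x ‖a ε x + (c t * ε) • ψ x‖ * ⟪a ε x + (c t * ε) • ψ x, ψ x⟫) ∂μ) F
      (𝓝 (∫ x, σ x ‖a₀ x‖ * ⟪a₀ x, ψ x⟫ ∂μ)) := by
  set pp := ENNReal.ofReal p with hppdef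
  have hp0 : (0:ℝ) < p := by linarith
  have hpp1 : 1 ≤ pp := by
    rw [hppdef]
    exact ENNReal.one_le_ofReal.2 (by linarith)
  have hppt : pp ≠ ∞ := ENNReal.ofReal_ne_top
  have hpp0 : pp ≠ 0 := by
    rw [hppdef, ne_eq, ENNReal.ofReal_eq_zero]
    linarith
  have hptoReal : pp.toReal = p := ENNReal.toReal_ofReal hp0.le
  set g : EuclideanSpace ℝ (Fin n) → ℝ := fun x => σ x ‖a₀ x‖ * ⟪a₀ x, ψ x⟫ with hg
  rw [tendsto_iff_seq_tendsto]
  intro e he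
  have he0 : Tendsto e atTop (𝓝 0) := hid.comp he
  have heconv : Tendsto (fun m => eLpNorm (fun x => a (e m) x - a₀ x) pp μ) atTop (𝓝 0) :=
    hconv.comp he
  have hesmall : ∀ᶠ m in atTop, |e m| ≤ 1 := he.eventually hsmall
  apply tendsto_of_subseq_tendsto
  intro ns hns
  have h2 : ∀ k : ℕ, ∃ N, ∀ m ≥ N,
      eLpNorm (fun x => a (e (ns m)) x - a₀ x) pp μ ≤ 2⁻¹ ^ k := by
    intro k
    have hk : (0:ℝ≥0∞) < 2⁻¹ ^ k := by
      apply ENNReal.pow_pos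
      simp
    have hev := (heconv.comp hns).eventually_lt_const hk
    exact eventually_atTop.1 (hev.mono fun m hm => hm.le)
  obtain ⟨ms, hms_mono, hms⟩ := Filter.extraction_forall_of_eventually' h2
  refine ⟨ms, ?_⟩
  set εs : ℕ → ℝ := fun k => e (ns (ms k)) with hεs
  have hεs0 : Tendsto εs atTop (𝓝 0) := he0.comp (hns.comp hms_mono.tendsto_atTop)
  have hεs1 : ∀ᶠ k in atTop, |εs k| ≤ 1 :=
    (hns.comp hms_mono.tendsto_atTop).eventually hesmall
  obtain ⟨W, hWp, hW0, hWae⟩ := exists_dominating hpp1 hppt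
    (d := fun k => fun x => a (εs k) x - a₀ x)
    (fun k => ((hameas (εs k)).sub ha₀meas).aestronglyMeasurable)
    (fun k => hms k)
  set B : EuclideanSpace ℝ (Fin n) → ℝ := fun x => ‖a₀ x‖ + W x + ‖ψ x‖ with hB
  have hB0 : ∀ x, 0 ≤ B x :=
    fun x => add_nonneg (add_nonneg (norm_nonneg _) (hW0 x)) (norm_nonneg _)
  have hBmem : MemLp B pp μ := (ha₀.norm.add hWp).add hψp.norm
  set K : EuclideanSpace ℝ (Fin n) → ℝ :=
    fun x => σu * (1 + E₀ ^ (2 - p)) * (‖ψ x‖ + (B x ^ p + ‖ψ x‖ ^ p)) with hK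
  have hKint : Integrable K μ := by
    apply Integrable.const_mul
    apply Integrable.add
    · exact (hψp.integrable hpp1).norm
    · apply Integrable.add
      · have h1 := hBmem.integrable_norm_rpow hpp0 hppt
        rw [hptoReal] at h1
        exact h1.congr (Filter.Eventually.of_forall fun x => by
          simp only [Real.norm_eq_abs]
          rw [abs_of_nonneg (hB0 x)])
      · have h1 := hψp.integrable_norm_rpow hpp0 hppt
        rw [hptoReal] at h1
        exact h1
  -- the uniform pointwise bound
  have hptwise : ∀ᵐ x ∂μ, ∀ k : ℕ, |εs k| ≤ 1 → ∀ t ∈ Set.Ioc (0:ℝ) 1,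
      |σ x ‖a (εs k) x + (c t * εs k) • ψ x‖ *
        ⟪a (εs k) x + (c t * εs k) • ψ x, ψ x⟫| ≤ K x := by
    filter_upwards [hbd, hWae] with x hbdx hWx
    intro k hk t ht
    set Y : EuclideanSpace ℝ (Fin n) := a (εs k) x + (c t * εs k) • ψ x with hY
    have hYB : ‖Y‖ ≤ B x := by
      have h1 : ‖a (εs k) x‖ ≤ ‖a₀ x‖ + W x := by
        have hWk := hWx.1 k
        calc ‖a (εs k) x‖ = ‖a₀ x + (a (εs k) x - a₀ x)‖ := by
              congr 1; abel
          _ ≤ ‖a₀ x‖ + ‖a (εs k) x - a₀ x‖ := norm_add_le _ _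
          _ ≤ ‖a₀ x‖ + W x := by linarith
      have h2 : |c t * εs k| ≤ 1 := by
        rw [abs_mul]
        calc |c t| * |εs k| ≤ 1 * 1 :=
              mul_le_mul (hc1 t ht) hk (abs_nonneg _) zero_le_one
          _ = 1 := one_mul 1
      have h3 := mul_le_mul_of_nonneg_right h2 (norm_nonneg (ψ x))
      calc ‖Y‖ ≤ ‖a (εs k) x‖ + ‖(c t * εs k) • ψ x‖ := norm_add_le _ _
        _ = ‖a (εs k) x‖ + |c t * εs k| * ‖ψ x‖ := by rw [norm_smul, Real.norm_eq_abs]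
        _ ≤ (‖a₀ x‖ + W x) + 1 * ‖ψ x‖ := by linarith
        _ = B x := by rw [hB]; ring
    rcases eq_or_lt_of_le (norm_nonneg Y) with h0 | hpos
    · have hY0 : Y = 0 := norm_eq_zero.1 h0.symm
      rw [hY0]
      simp only [inner_zero_left, mul_zero, abs_zero]
      have : (0:ℝ) ≤ K x := by
        rw [hK]
        apply mul_nonneg (mul_nonneg hσu (by positivity))
        have := Real.rpow_nonneg (hB0 x) p
        have := Real.rpow_nonneg (norm_nonneg (ψ x)) p
        positivity
      exact this
    · obtain ⟨hs0, hsle⟩ := hbdx ‖Y‖ hpos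
      have hCS : |⟪Y, ψ x⟫| ≤ ‖Y‖ * ‖ψ x‖ := abs_real_inner_le_norm _ _
      have hfinal := pointwise_bound hσu hE₀ hp (norm_nonneg Y) (norm_nonneg (ψ x))
        hYB hs0 (fun _ => hsle)
      calc |σ x ‖Y‖ * ⟪Y, ψ x⟫| = σ x ‖Y‖ * |⟪Y, ψ x⟫| := by
            rw [abs_mul, abs_of_nonneg hs0]
        _ ≤ σ x ‖Y‖ * (‖Y‖ * ‖ψ x‖) := mul_le_mul_of_nonneg_left hCS hs0
        _ = σ x ‖Y‖ * ‖Y‖ * ‖ψ x‖ := by ring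
        _ ≤ K x := hfinal
  set G : ℕ → EuclideanSpace ℝ (Fin n) → ℝ := fun k x => ∫ t in (0:ℝ)..1,
      σ x ‖a (εs k) x + (c t * εs k) • ψ x‖ *
        ⟪a (εs k) x + (c t * εs k) • ψ x, ψ x⟫ with hG
  have hGmeas : ∀ k, AEStronglyMeasurable (G k) μ := by
    intro k
    set ν : Measure ℝ := volume.restrict (Set.Ioc (0:ℝ) 1) with hν
    have hπ : Measure.QuasiMeasurePreserving (Prod.fst :
        EuclideanSpace ℝ (Fin n) × ℝ → EuclideanSpace ℝ (Fin n)) (μ.prod ν) μ :=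
      Measure.quasiMeasurePreserving_fst
    have hYmeas : Measurable fun q : EuclideanSpace ℝ (Fin n) × ℝ =>
        a (εs k) q.1 + (c q.2 * εs k) • ψ q.1 :=
      ((hameas _).comp measurable_fst).add
        (((hc.measurable.comp measurable_snd).mul measurable_const).smul
          (hψmeas.comp measurable_fst))
    have hσpart : AEMeasurable (fun q : EuclideanSpace ℝ (Fin n) × ℝ =>
        σ q.1 ‖a (εs k) q.1 + (c q.2 * εs k) • ψ q.1‖) (μ.prod ν) :=
      aemeasurable_comp_nonneg σ hσmeas hσcont Prod.fst hπ _ hYmeas.norm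
        (fun q => norm_nonneg _)
    have hinner : Measurable fun q : EuclideanSpace ℝ (Fin n) × ℝ =>
        ⟪a (εs k) q.1 + (c q.2 * εs k) • ψ q.1, ψ q.1⟫ :=
      hYmeas.inner (hψmeas.comp measurable_fst)
    have hprod : AEStronglyMeasurable (fun q : EuclideanSpace ℝ (Fin n) × ℝ =>
        σ q.1 ‖a (εs k) q.1 + (c q.2 * εs k) • ψ q.1‖ *
          ⟪a (εs k) q.1 + (c q.2 * εs k) • ψ q.1, ψ q.1⟫) (μ.prod ν) :=
      (hσpart.mul hinner.aemeasurable).aestronglyMeasurable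
    have key := hprod.integral_prod_right'
    apply key.congr
    apply Filter.Eventually.of_forall
    intro x
    exact (intervalIntegral.integral_of_le zero_le_one).symm
  have hGconv : ∀ᵐ x ∂μ, Tendsto (fun k => G k x) atTop (𝓝 (g x)) := by
    filter_upwards [hσcont, hWae, hptwise] with x hcx hWx hptx
    have hΘ : Continuous fun y : EuclideanSpace ℝ (Fin n) => σ x ‖y‖ * ⟪y, ψ x⟫ := by
      have h1 : Continuous fun y : EuclideanSpace ℝ (Fin n) => σ x ‖y‖ :=
        hcx.comp_continuous continuous_norm fun y => norm_nonneg _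
      exact h1.mul (continuous_id.inner continuous_const)
    have hDCT := intervalIntegral.tendsto_integral_filter_of_dominated_convergence
      (μ := volume) (a := (0:ℝ)) (b := 1) (l := atTop)
      (F := fun k t => σ x ‖a (εs k) x + (c t * εs k) • ψ x‖ *
        ⟪a (εs k) x + (c t * εs k) • ψ x, ψ x⟫)
      (f := fun _ : ℝ => g x) (bound := fun _ : ℝ => K x)
      ?_ ?_ intervalIntegrable_const ?_
    · have hval : (∫ t in (0:ℝ)..1, (fun _ : ℝ => g x) t) = g x := by
        rw [intervalIntegral.integral_const, sub_zero, one_smul]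
      rw [hval] at hDCT
      exact hDCT
    · apply Filter.Eventually.of_forall
      intro k
      apply Continuous.aestronglyMeasurable
      apply hΘ.comp
      exact continuous_const.add ((hc.mul continuous_const).smul continuous_const)
    · filter_upwards [hεs1] with k hk
      apply Filter.Eventually.of_forall
      intro t ht
      rw [Set.uIoc_of_le zero_le_one] at ht
      rw [Real.norm_eq_abs]
      exact hptx k hk t ht
    · apply Filter.Eventually.of_forall
      intro t ht
      have hY : Tendsto (fun k => a (εs k) x + (c t * εs k) • ψ x) atTop (𝓝 (a₀ x)) := by
        have h1 : Tendsto (fun k => a (εs k) x) atTop (𝓝 (a₀ x)) := by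
          have h2 := hWx.2.add_const (a₀ x)
          simp only [zero_add] at h2
          apply h2.congr
          intro k
          abel
        have h3 : Tendsto (fun k => (c t * εs k) • ψ x) atTop
            (𝓝 (0 : EuclideanSpace ℝ (Fin n))) := by
          have h4 : Tendsto (fun k => c t * εs k) atTop (𝓝 0) := by
            simpa using hεs0.const_mul (c t)
          simpa using h4.smul_const (ψ x)
        simpa using h1.add h3
      have hcomp := (hΘ.tendsto (a₀ x)).comp hY
      exact hcomp
  -- final dominated convergence over μ
  have hbound : ∀ᶠ k in atTop, ∀ᵐ x ∂μ, ‖G k x‖ ≤ K x := by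
    filter_upwards [hεs1] with k hk
    filter_upwards [hptwise] with x hptx
    have hnorm := intervalIntegral.norm_integral_le_of_norm_le_const
      (C := K x) (f := fun t => σ x ‖a (εs k) x + (c t * εs k) • ψ x‖ *
        ⟪a (εs k) x + (c t * εs k) • ψ x, ψ x⟫) (a := (0:ℝ)) (b := 1) ?_
    · simpa using hnorm
    · intro t ht
      rw [Set.uIoc_of_le zero_le_one] at ht
      rw [Real.norm_eq_abs]
      exact hptx k hk t ht
  have final := tendsto_integral_filter_of_dominated_convergence (μ := μ) (l := atTop)
    (F := G) (f := g) K (Filter.Eventually.of_forall hGmeas) hbound hKint hGconv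
  exact final

end GDaux

/-- **Gâteaux derivative with respect to the boundary datum** (Proposition 3.4):
if `u_ε` minimizes `F_σ` over the translated admissible class `A_ε = {v + εφ : v ∈ A}`
and `∇u_ε → ∇u₀` in `L^p(Ω)` as `ε → 0`, then
`lim_{ε→0} (F_σ(u_ε) − F_σ(u₀))/ε = ∫_Ω σ(x,|∇u₀|) ∇u₀·∇φ dx`. -/
theorem gateaux_derivative_composed_energy
    {n : ℕ} (Ω : Set (EuclideanSpace ℝ (Fin n)))
    (hΩo : IsOpen Ω) (hΩb : Bornology.IsBounded Ω)
    (p : ℝ) (hp : 2 ≤ p)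
    (σ : EuclideanSpace ℝ (Fin n) → ℝ → ℝ)
    -- (H1) measurability in x
    (hσmeas : ∀ E : ℝ, 0 ≤ E → AEMeasurable (fun x => σ x E) (volume.restrict Ω))
    -- (H2) strict monotonicity of E ↦ σ(x,E)·E on (0,∞)
    (hσmono : ∀ᵐ x ∂(volume.restrict Ω), StrictMonoOn (fun E => σ x E * E) (Set.Ioi 0))
    -- (H3) continuity of E ↦ σ(x,E) on [0,∞)
    (hσcont : ∀ᵐ x ∂(volume.restrict Ω), ContinuousOn (fun E => σ x E) (Set.Ici 0))
    -- (H4) two-sided growth bound with exponent p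
    (hσgrowth : ∃ σl σu E₀ : ℝ, 0 < σl ∧ σl ≤ σu ∧ 0 < E₀ ∧
      ∀ᵐ x ∂(volume.restrict Ω), ∀ E > (0:ℝ),
        σl * (E / E₀) ^ (p - 2) ≤ σ x E ∧ σ x E ≤ σu * max 1 ((E / E₀) ^ (p - 2)))
    -- the admissible class: weakly differentiable functions with gradients in L²(Ω) ∩ L^p(Ω)
    (A : Set (EuclideanSpace ℝ (Fin n) → ℝ))
    (hA : ∀ v ∈ A, Differentiable ℝ v ∧
      MemLp (fun x => gradient v x) 2 (volume.restrict Ω) ∧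
      MemLp (fun x => gradient v x) (ENNReal.ofReal p) (volume.restrict Ω))
    -- the direction φ, weakly differentiable with gradient in L²(Ω) ∩ L^p(Ω)
    (φ : EuclideanSpace ℝ (Fin n) → ℝ) (hφ : Differentiable ℝ φ)
    (hφL2 : MemLp (fun x => gradient φ x) 2 (volume.restrict Ω))
    (hφLp : MemLp (fun x => gradient φ x) (ENNReal.ofReal p) (volume.restrict Ω))
    -- for each ε ∈ (−1,1), u ε minimizes F_σ over A_ε = {v + εφ : v ∈ A}
    (u : ℝ → EuclideanSpace ℝ (Fin n) → ℝ)
    (hmin : ∀ ε ∈ Set.Ioo (-1:ℝ) 1,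
      (∃ v ∈ A, u ε = fun x => v x + ε * φ x) ∧
      ∀ w, (∃ v ∈ A, w = fun x => v x + ε * φ x) →
        dirichletEnergy Ω σ (u ε) ≤ dirichletEnergy Ω σ w)
    -- ∇u_ε → ∇u₀ in L^p(Ω) as ε → 0
    (hconv : Tendsto (fun ε : ℝ =>
        eLpNorm (fun x => gradient (u ε) x - gradient (u 0) x)
          (ENNReal.ofReal p) (volume.restrict Ω))
      (𝓝[Set.Ioo (-1:ℝ) 1 \ {0}] 0) (𝓝 0)) :
    Tendsto (fun ε : ℝ =>
        (dirichletEnergy Ω σ (u ε) - dirichletEnergy Ω σ (u 0)) / ε)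
      (𝓝[Set.Ioo (-1:ℝ) 1 \ {0}] 0)
      (𝓝 (∫ x in Ω, σ x ‖gradient (u 0) x‖ * ⟪gradient (u 0) x, gradient φ x⟫)) := by
  classical
  obtain ⟨σl, σu, E₀, hσl0, hσlu, hE₀, hσg⟩ := hσgrowth
  set μ := volume.restrict Ω with hμdef
  haveI hfin : IsFiniteMeasure μ :=
    ⟨by rw [hμdef, Measure.restrict_apply_univ]; exact hΩb.measure_lt_top⟩
  set pp := ENNReal.ofReal p with hppdef
  have hp0 : (0:ℝ) < p := by linarith
  have hpp1 : 1 ≤ pp := by rw [hppdef]; exact ENNReal.one_le_ofReal.2 (by linarith)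
  have hppt : pp ≠ ∞ := by rw [hppdef]; exact ENNReal.ofReal_ne_top
  have hpp0 : pp ≠ 0 := by rw [hppdef, ne_eq, ENNReal.ofReal_eq_zero]; linarith
  have hptoReal : pp.toReal = p := by rw [hppdef]; exact ENNReal.toReal_ofReal hp0.le
  have hσu0 : 0 ≤ σu := le_trans hσl0.le hσlu
  have hbd' : ∀ᵐ x ∂μ, ∀ ξ : ℝ, 0 < ξ →
      0 ≤ σ x ξ ∧ σ x ξ ≤ σu * max 1 ((ξ / E₀) ^ (p - 2)) := by
    filter_upwards [hσg] with x hx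
    intro ξ hξ
    obtain ⟨hl, hu⟩ := hx ξ hξ
    exact ⟨le_trans (mul_nonneg hσl0.le
      (Real.rpow_nonneg (div_nonneg hξ.le hE₀.le) _)) hl, hu⟩
  have hid : Tendsto (fun ε : ℝ => ε) (𝓝[Set.Ioo (-1:ℝ) 1 \ {0}] 0) (𝓝 (0:ℝ)) :=
    tendsto_id.mono_right nhdsWithin_le_nhds
  have hsmall : ∀ᶠ ε in (𝓝[Set.Ioo (-1:ℝ) 1 \ {0}] (0:ℝ)), |ε| ≤ 1 := by
    filter_upwards [self_mem_nhdsWithin] with ε hε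
    exact abs_le.2 ⟨hε.1.1.le, hε.1.2.le⟩
  -- facts about u 0
  obtain ⟨⟨v₀, hv₀, hueq₀⟩, hmin0⟩ := hmin 0 (by constructor <;> norm_num)
  have hu0 : u 0 = v₀ := by rw [hueq₀]; funext y; ring
  have hu0A : u 0 ∈ A := by rw [hu0]; exact hv₀
  have hu0diff : Differentiable ℝ (u 0) := by rw [hu0]; exact (hA v₀ hv₀).1
  have hu0mem : MemLp (fun x => gradient (u 0) x) pp μ := by
    have h := (hA v₀ hv₀).2.2
    rwa [← hu0] at h
  -- integrability of the composed density
  have qint : ∀ b : EuclideanSpace ℝ (Fin n) → EuclideanSpace ℝ (Fin n), Measurable b →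
      MemLp b pp μ → Integrable (fun x => dirichletDensity σ x ‖b x‖) μ := by
    intro b hbmeas hbp
    have hmeas : AEStronglyMeasurable (fun x => dirichletDensity σ x ‖b x‖) μ :=
      GDaux.qcomp_aestronglyMeasurable σ hσmeas hσcont (fun x => ‖b x‖) hbmeas.norm
        (fun x => norm_nonneg _)
    have hmaj : Integrable (fun x => σu * (1 + E₀ ^ (2 - p)) * (1 + 2 * ‖b x‖ ^ p)) μ := by
      apply Integrable.const_mul
      apply Integrable.add (integrable_const 1)
      have h1 := hbp.integrable_norm_rpow hpp0 hppt
      rw [hptoReal] at h1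
      exact h1.const_mul 2
    apply Integrable.mono' hmaj hmeas
    filter_upwards [hbd'] with x hbx
    rw [Real.norm_eq_abs]
    exact GDaux.density_bound hσu0 hE₀ hp hbx (norm_nonneg (b x))
  -- the difference identity
  have hdiff : ∀ w : EuclideanSpace ℝ (Fin n) → ℝ, Differentiable ℝ w →
      MemLp (fun x => gradient w x) pp μ → ∀ ε : ℝ,
      dirichletEnergy Ω σ (fun y => w y + ε * φ y) - dirichletEnergy Ω σ w
        = ε * ∫ x, (∫ t in (0:ℝ)..1,
            σ x ‖gradient w x + (t * ε) • gradient φ x‖ *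
              ⟪gradient w x + (t * ε) • gradient φ x, gradient φ x⟫) ∂μ := by
    intro w hw hwp ε
    have hgrad : ∀ x, gradient (fun y => w y + ε * φ y) x
        = gradient w x + ε • gradient φ x := fun x => GDaux.gradient_add_smul hw hφ ε x
    have hQ0 : Integrable (fun x => dirichletDensity σ x ‖gradient w x‖) μ :=
      qint _ (GDaux.gradient_measurable w) hwp
    have hQ1 : Integrable (fun x => dirichletDensity σ x
        ‖gradient w x + ε • gradient φ x‖) μ :=
      qint (fun x => gradient w x + ε • gradient φ x)
        ((GDaux.gradient_measurable w).add ((GDaux.gradient_measurable φ).const_smul ε))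
        (hwp.add (hφLp.const_smul ε))
    have h1 : dirichletEnergy Ω σ (fun y => w y + ε * φ y)
        = ∫ x, dirichletDensity σ x ‖gradient w x + ε • gradient φ x‖ ∂μ := by
      show (∫ x, dirichletDensity σ x ‖gradient (fun y => w y + ε * φ y) x‖ ∂μ) = _
      apply integral_congr_ae
      apply Filter.Eventually.of_forall
      intro x
      simp only [hgrad x]
    have h0 : dirichletEnergy Ω σ w = ∫ x, dirichletDensity σ x ‖gradient w x‖ ∂μ := rfl
    rw [h1, h0, ← integral_sub hQ1 hQ0]
    have hptw : ∀ᵐ x ∂μ, dirichletDensity σ x ‖gradient w x + ε • gradient φ x‖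
        - dirichletDensity σ x ‖gradient w x‖
        = ε * ∫ t in (0:ℝ)..1, σ x ‖gradient w x + (t * ε) • gradient φ x‖ *
            ⟪gradient w x + (t * ε) • gradient φ x, gradient φ x⟫ := by
      filter_upwards [hσcont, hbd'] with x hcx hbx
      have hftc : dirichletDensity σ x ‖gradient w x + ε • gradient φ x‖
          - dirichletDensity σ x ‖gradient w x‖
          = ∫ t in (0:ℝ)..1, σ x ‖gradient w x + t • (ε • gradient φ x)‖ *
              ⟪gradient w x + t • (ε • gradient φ x), ε • gradient φ x⟫ :=
        GDaux.ftc_pointwise (fun En => σ x En) hcx hσu0 hE₀ hp hbx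
          (gradient w x) (ε • gradient φ x)
      rw [hftc, ← intervalIntegral.integral_const_mul]
      apply intervalIntegral.integral_congr
      intro t ht
      simp only [smul_smul, real_inner_smul_right]
      ring
    rw [integral_congr_ae hptw, integral_const_mul]
  -- the two approximating functionals
  set P1 : ℝ → ℝ := fun ε => ∫ x, (∫ t in (0:ℝ)..1,
      σ x ‖gradient (u 0) x + (t * ε) • gradient φ x‖ *
        ⟪gradient (u 0) x + (t * ε) • gradient φ x, gradient φ x⟫) ∂μ with hP1def
  set P2 : ℝ → ℝ := fun ε => ∫ x, (∫ t in (0:ℝ)..1,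
      σ x ‖gradient (u ε) x + ((t - 1) * ε) • gradient φ x‖ *
        ⟪gradient (u ε) x + ((t - 1) * ε) • gradient φ x, gradient φ x⟫) ∂μ with hP2def
  have hP1 : Tendsto P1 (𝓝[Set.Ioo (-1:ℝ) 1 \ {0}] 0)
      (𝓝 (∫ x, σ x ‖gradient (u 0) x‖ * ⟪gradient (u 0) x, gradient φ x⟫ ∂μ)) := by
    have hzero : Tendsto (fun ε : ℝ => eLpNorm
        (fun x => gradient (u 0) x - gradient (u 0) x) pp μ)
        (𝓝[Set.Ioo (-1:ℝ) 1 \ {0}] 0) (𝓝 0) := by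
      have hz : ∀ ε : ℝ, eLpNorm (fun x => gradient (u 0) x - gradient (u 0) x) pp μ
          = 0 := by
        intro ε
        have h0 : (fun x => gradient (u 0) x - gradient (u 0) x)
            = (0 : EuclideanSpace ℝ (Fin n) → EuclideanSpace ℝ (Fin n)) := by
          funext x; simp
        rw [h0, eLpNorm_zero]
      have h1 : (fun ε : ℝ => eLpNorm (fun x => gradient (u 0) x - gradient (u 0) x) pp μ)
          = fun _ : ℝ => (0 : ℝ≥0∞) := funext fun ε => hz ε
      rw [h1]
      exact tendsto_const_nhds
    have := GDaux.key_tendsto σ hσmeas hσcont hσu0 hE₀ hp hbd'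
      (fun x => gradient φ x) (GDaux.gradient_measurable φ) hφLp
      (𝓝[Set.Ioo (-1:ℝ) 1 \ {0}] 0) hid hsmall
      (fun _ => fun x => gradient (u 0) x) (fun x => gradient (u 0) x)
      (fun _ => GDaux.gradient_measurable _) (GDaux.gradient_measurable _) hu0mem
      hzero (fun t => t) continuous_id
      (fun t ht => by
        have h := Set.mem_Ioc.1 ht
        show |t| ≤ 1
        rw [abs_le]
        exact ⟨by linarith [h.1], h.2⟩)
    exact this
  have hP2 : Tendsto P2 (𝓝[Set.Ioo (-1:ℝ) 1 \ {0}] 0)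
      (𝓝 (∫ x, σ x ‖gradient (u 0) x‖ * ⟪gradient (u 0) x, gradient φ x⟫ ∂μ)) := by
    have := GDaux.key_tendsto σ hσmeas hσcont hσu0 hE₀ hp hbd'
      (fun x => gradient φ x) (GDaux.gradient_measurable φ) hφLp
      (𝓝[Set.Ioo (-1:ℝ) 1 \ {0}] 0) hid hsmall
      (fun ε => fun x => gradient (u ε) x) (fun x => gradient (u 0) x)
      (fun ε => GDaux.gradient_measurable _) (GDaux.gradient_measurable _) hu0mem
      hconv (fun t => t - 1) (continuous_id.sub continuous_const)
      (fun t ht => by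
        have h := Set.mem_Ioc.1 ht
        show |t - 1| ≤ 1
        rw [abs_le]
        exact ⟨by linarith [h.1], by linarith [h.2]⟩)
    exact this
  -- eventual squeeze inequalities
  have hsq : ∀ᶠ ε in (𝓝[Set.Ioo (-1:ℝ) 1 \ {0}] (0:ℝ)),
      min (P1 ε) (P2 ε) ≤ (dirichletEnergy Ω σ (u ε) - dirichletEnergy Ω σ (u 0)) / ε
      ∧ (dirichletEnergy Ω σ (u ε) - dirichletEnergy Ω σ (u 0)) / ε
        ≤ max (P1 ε) (P2 ε) := by
    filter_upwards [self_mem_nhdsWithin] with ε hε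
    have hεI : ε ∈ Set.Ioo (-1:ℝ) 1 := hε.1
    have hεne : ε ≠ 0 := by simpa using hε.2
    obtain ⟨⟨v, hv, hueq⟩, hminε⟩ := hmin ε hεI
    have hvdiff := (hA v hv).1
    have hvmem := (hA v hv).2.2
    have hup : dirichletEnergy Ω σ (u ε)
        ≤ dirichletEnergy Ω σ (fun y => u 0 y + ε * φ y) :=
      hminε _ ⟨u 0, hu0A, rfl⟩
    have hlow : dirichletEnergy Ω σ (u 0) ≤ dirichletEnergy Ω σ v := by
      apply hmin0 v ⟨v, hv, ?_⟩
      funext y; ring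
    have hidP : dirichletEnergy Ω σ (fun y => u 0 y + ε * φ y)
        - dirichletEnergy Ω σ (u 0) = ε * P1 ε := hdiff (u 0) hu0diff hu0mem ε
    have hgradv : ∀ x, gradient (u ε) x = gradient v x + ε • gradient φ x := by
      intro x; rw [hueq]; exact GDaux.gradient_add_smul hvdiff hφ ε x
    have hidM : dirichletEnergy Ω σ (u ε) - dirichletEnergy Ω σ v = ε * P2 ε := by
      have h2 := hdiff v hvdiff hvmem ε
      rw [hueq]
      rw [h2]
      congr 1
      show (∫ x, (∫ t in (0:ℝ)..1, σ x ‖gradient v x + (t * ε) • gradient φ x‖ *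
          ⟪gradient v x + (t * ε) • gradient φ x, gradient φ x⟫) ∂μ)
        = ∫ x, (∫ t in (0:ℝ)..1,
            σ x ‖gradient (u ε) x + ((t - 1) * ε) • gradient φ x‖ *
              ⟪gradient (u ε) x + ((t - 1) * ε) • gradient φ x, gradient φ x⟫) ∂μ
      apply integral_congr_ae
      apply Filter.Eventually.of_forall
      intro x
      apply intervalIntegral.integral_congr
      intro t ht
      have hvec : gradient v x + (t * ε) • gradient φ x
          = gradient (u ε) x + ((t - 1) * ε) • gradient φ x := by
        rw [hgradv x, sub_mul, one_mul, sub_smul]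
        abel
      simp only [hvec]
    have hA1 : dirichletEnergy Ω σ (u ε) - dirichletEnergy Ω σ (u 0) ≤ ε * P1 ε := by
      linarith
    have hA2 : ε * P2 ε ≤ dirichletEnergy Ω σ (u ε) - dirichletEnergy Ω σ (u 0) := by
      linarith
    constructor
    · rcases hεne.lt_or_gt with hneg | hpos
      · rw [le_div_iff_of_neg hneg]
        have h1 : P1 ε * ε ≤ min (P1 ε) (P2 ε) * ε :=
          mul_le_mul_of_nonpos_right (min_le_left _ _) hneg.le
        nlinarith
      · rw [le_div_iff₀ hpos]
        have h1 : min (P1 ε) (P2 ε) * ε ≤ P2 ε * ε :=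
          mul_le_mul_of_nonneg_right (min_le_right _ _) hpos.le
        nlinarith
    · rcases hεne.lt_or_gt with hneg | hpos
      · rw [div_le_iff_of_neg hneg]
        have h1 : max (P1 ε) (P2 ε) * ε ≤ P2 ε * ε :=
          mul_le_mul_of_nonpos_right (le_max_right _ _) hneg.le
        nlinarith
      · rw [div_le_iff₀ hpos]
        have h1 : P1 ε * ε ≤ max (P1 ε) (P2 ε) * ε :=
          mul_le_mul_of_nonneg_right (le_max_left _ _) hpos.le
        nlinarith
  have hminT : Tendsto (fun ε => min (P1 ε) (P2 ε)) (𝓝[Set.Ioo (-1:ℝ) 1 \ {0}] 0)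
      (𝓝 (∫ x, σ x ‖gradient (u 0) x‖ * ⟪gradient (u 0) x, gradient φ x⟫ ∂μ)) := by
    have h := hP1.min hP2
    rwa [min_self] at h
  have hmaxT : Tendsto (fun ε => max (P1 ε) (P2 ε)) (𝓝[Set.Ioo (-1:ℝ) 1 \ {0}] 0)
      (𝓝 (∫ x, σ x ‖gradient (u 0) x‖ * ⟪gradient (u 0) x, gradient φ x⟫ ∂μ)) := by
    have h := hP1.max hP2
    rwa [max_self] at h
  exact tendsto_of_tendsto_of_tendsto_of_le_of_le' hminT hmaxT
    (hsq.mono fun ε h => h.1) (hsq.mono fun ε h => h.2)
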